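/- In the free graded Lie algebra over Z_(p) on generators w₁, w₂, w₃, w₄, w₅ and {x_v} (with the differential ∂ whose only nonzero values on generators are ∂(w₄) = [w₂,w₂] and ∂(w₅) = [w₃,w₃]), any cycle of the form c₁[x_v,[x_u,[x_t,[w₂,w₁]]]] with c₁ ≠ 0 is not a boundary, since its expansion in the tensor algebra contains no word with two occurrences of w₂ or two occurrences of w₃. -/

import Mathlib

namespace Stmt14

variable {V : Type}

/-- Generators: `Sum.inl i` is `wᵢ₊₁` (`i = 0,…,4`), `Sum.inr v` is `x_v`. -/
noncomputable def w (i : Fin 5) : FreeAlgebra ℚ (Fin 5 ⊕ V) :=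
  FreeAlgebra.ι ℚ (Sum.inl i)

noncomputable def x (v : V) : FreeAlgebra ℚ (Fin 5 ⊕ V) :=
  FreeAlgebra.ι ℚ (Sum.inr v)

/-- The span of all words containing `w₂²` or `w₃²` as a factor: this contains the image
of the differential `∂` with `∂w₄ = [w₂,w₂] = 2w₂²`, `∂w₅ = [w₃,w₃] = 2w₃²` and
`∂ = 0` on the other generators. -/
noncomputable def boundarySpan (V : Type) : Submodule ℚ (FreeAlgebra ℚ (Fin 5 ⊕ V)) :=
  Submodule.span ℚ
    {y | ∃ b c : FreeAlgebra ℚ (Fin 5 ⊕ V),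
      y = b * (w 1) ^ 2 * c ∨ y = b * (w 2) ^ 2 * c}

/-- The graded Lie element `[x_v,[x_u,[x_t,[w₂,w₁]]]]` expanded in the tensor algebra:
`w₁, w₂` are of odd degree, so `[w₂,w₁] = w₂w₁ + w₁w₂`, while the outer brackets with the
even-degree generators `x_v, x_u, x_t` are commutators. -/
noncomputable def theCycle (v u t : V) : FreeAlgebra ℚ (Fin 5 ⊕ V) :=
  let inner := w 1 * w 0 + w 0 * w 1
  let e₂ := x t * inner - inner * x t
  let e₁ := x u * e₂ - e₂ * x u
  x v * e₁ - e₁ * x v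

/-- Images of the generators in `Matrix (Fin 3) (Fin 3) ℚ`. -/
noncomputable def gen (g : Fin 5 ⊕ V) : Matrix (Fin 3) (Fin 3) ℚ :=
  match g with
  | Sum.inl i => if i = 0 then !![0,0,0;0,0,1;0,0,0]
      else if i = 1 then !![0,1,0;0,0,0;0,0,0] else 0
  | Sum.inr _ => !![0,0,0;0,0,0;0,0,1]

/-- The witnessing algebra map. -/
noncomputable def ψ : FreeAlgebra ℚ (Fin 5 ⊕ V) →ₐ[ℚ] Matrix (Fin 3) (Fin 3) ℚ :=
  FreeAlgebra.lift ℚ gen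

lemma ψ_w0 : ψ (V := V) (w 0) = !![0,0,0;0,0,1;0,0,0] := by
  simp [ψ, w, gen, FreeAlgebra.lift_ι_apply]

lemma ψ_w1 : ψ (V := V) (w 1) = !![0,1,0;0,0,0;0,0,0] := by
  simp [ψ, w, gen, FreeAlgebra.lift_ι_apply]

lemma ψ_w2 : ψ (V := V) (w 2) = 0 := by
  simp [ψ, w, gen, FreeAlgebra.lift_ι_apply]

lemma ψ_x (v : V) : ψ (x v) = !![0,0,0;0,0,0;0,0,1] := by
  simp [ψ, x, gen, FreeAlgebra.lift_ι_apply]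

lemma ψ_boundary (y : FreeAlgebra ℚ (Fin 5 ⊕ V)) (hy : y ∈ boundarySpan V) :
    ψ y = 0 := by
  induction hy using Submodule.span_induction with
  | mem z hz =>
      obtain ⟨b, c, h | h⟩ := hz <;> subst h <;>
        simp only [map_mul, map_pow, ψ_w1, ψ_w2]
      · have : (!![0,1,0;0,0,0;0,0,0] : Matrix (Fin 3) (Fin 3) ℚ) ^ 2 = 0 := by
          rw [sq]
          norm_num [Matrix.mul_fin_three, sq, ← Matrix.ext_iff, Fin.forall_fin_succ]
        simp [this]
      · simp
  | zero => simp
  | add a b _ _ ha hb => simp [ha, hb]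
  | smul r a _ ha => simp [ha]

lemma ψ_cycle (v u t : V) :
    ψ (theCycle v u t) = !![0,0,-1;0,0,0;0,0,0] := by
  simp only [theCycle, map_sub, map_add, map_mul, ψ_w0, ψ_w1, ψ_x]
  norm_num [Matrix.mul_fin_three, Matrix.smul_of, Matrix.sub_apply, ← Matrix.ext_iff,
    Fin.forall_fin_succ, Matrix.add_apply, Matrix.neg_apply, Matrix.vecHead, Matrix.vecTail,
    show (Matrix.of.symm (0 : Matrix (Fin 3) (Fin 3) ℚ)) = 0 from rfl,
    show (0 : Fin 3 → ℚ) = ![0,0,0] from by ext i; fin_cases i <;> rfl]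
  simp only [Matrix.cons_val, Matrix.cons_val_zero, Matrix.cons_val_one, Matrix.cons_val_two] at *
  norm_num

/-- Any nonzero multiple `c₁·[x_v,[x_u,[x_t,[w₂,w₁]]]]` is not a boundary: its expansion
in the tensor algebra contains no word with two occurrences of `w₂` or of `w₃`, while
every boundary lies in the span of words containing `w₂²` or `w₃²`. -/
theorem stmt_14 (v u t : V) (c₁ : ℚ) (hc₁ : c₁ ≠ 0)
    (d : FreeAlgebra ℚ (Fin 5 ⊕ V) →ₗ[ℚ] FreeAlgebra ℚ (Fin 5 ⊕ V))
    (hd : ∀ a, d a ∈ boundarySpan V) :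
    ∀ z, d z ≠ c₁ • theCycle v u t := by
  intro z h
  have h0 : ψ (d z) = 0 := ψ_boundary _ (hd z)
  rw [h, map_smul, ψ_cycle] at h0
  have := congrFun (congrFun h0 0) 2
  simp at this
  exact hc₁ this

end Stmt14
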